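/- Let D be an m × l matrix over a linearly ordered set such that every row and every column is nondecreasing, and every entry in column j is ≤ every entry in column j + k (for a parameter k ≤ l). Partition the columns of D into consecutive groups of k columns each, D₁, D₂, …. Then the mk smallest elements of D₁ ∪ D₂ (as a multiset) are all ≤ every element of D₃ ∪ D₄ ∪ …; consequently, the mk smallest elements of the whole matrix are contained in D₁ ∪ D₂. -/

import Mathlib

/-- sliding-window correctness: let `D` be an `m × l` matrix
with nondecreasing rows and columns, in which every entry in column `j₁` is at most
every entry in column `j₂ = j₁ + k`.  Then the `mk` smallest elements of the first
two groups `D₁ ∪ D₂` (columns `0, …, 2k-1`) are `≤` every element of the later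
groups `D₃ ∪ D₄ ∪ …` (columns `≥ 2k`): for every entry `y = D p j` with `j ≥ 2k`,
at least `mk` entries in the first `2k` columns are `≤ y` (hence the `mk` smallest
elements of the whole matrix also lie in the first `2k` columns). -/
theorem sliding_window_merge
    {α : Type*} [LinearOrder α] (m l k : ℕ) (hm : 1 ≤ m) (hk : 1 ≤ k) (hl : k ≤ l)
    (D : Fin m → Fin l → α)
    (hrow : ∀ p, Monotone (D p))
    (hcol : ∀ j : Fin l, Monotone fun p => D p j)
    (hgap : ∀ j₁ j₂ : Fin l, (j₁ : ℕ) + k = (j₂ : ℕ) →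
      ∀ p₁ p₂ : Fin m, D p₁ j₁ ≤ D p₂ j₂) :
    ∀ (p : Fin m) (j : Fin l), 2 * k ≤ (j : ℕ) →
      m * k ≤ (Finset.univ.filter
        (fun pj : Fin m × Fin l => (pj.2 : ℕ) < 2 * k ∧ D pj.1 pj.2 ≤ D p j)).card := by
  intro p j hj
  have hcard : (Finset.univ : Finset (Fin m × Fin k)).card = m * k := by simp
  rw [← hcard]
  have hjl := j.2
  apply Finset.card_le_card_of_injOn
    (fun qc : Fin m × Fin k => (qc.1, ⟨(qc.2 : ℕ), lt_of_lt_of_le qc.2.2 hl⟩))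
  · rintro ⟨q, c⟩ _
    simp only [Finset.coe_filter, Finset.mem_coe, Finset.mem_filter, Finset.mem_univ, true_and, Set.mem_setOf_eq]
    have hck : (c : ℕ) < k := c.2
    refine ⟨by omega, ?_⟩
    have h1 : (c : ℕ) + k < l := by omega
    have h2 : D q ⟨(c : ℕ), lt_of_lt_of_le c.2 hl⟩ ≤ D p ⟨(c : ℕ) + k, h1⟩ :=
      hgap _ _ rfl _ _
    have h3 : D p ⟨(c : ℕ) + k, h1⟩ ≤ D p j := hrow p (by simp [Fin.le_def]; omega)
    exact le_trans h2 h3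
  · rintro ⟨q, c⟩ _ ⟨q', c'⟩ _ h
    simp only [Prod.mk.injEq, Fin.mk.injEq] at h
    simp [Prod.ext_iff, Fin.ext_iff, h.1, h.2]
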